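/- Let X and Y be complex Banach spaces, m ≥ 2, and Q ∈ 𝓟(^{m−1}X, 𝓛(X,Y)). Then Q = dP for some P ∈ 𝓟(^m X, Y) if and only if y∘d(x∘Q) = x∘d(y∘Q) as elements of 𝓟(^{m−2}X, Y), for all x, y ∈ X. -/

import Mathlib

open Fin Function

section helpers

variable {X Z : Type*} [NormedAddCommGroup X] [NormedSpace ℂ X]
  [NormedAddCommGroup Z] [NormedSpace ℂ Z]

private lemma diag_hasFDeriv {n : ℕ} (R : ContinuousMultilinearMap ℂ (fun _ : Fin n => X) Z)
    (u : X) :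
    HasFDerivAt (fun v : X => R fun _ => v)
      ((R.linearDeriv fun _ => u).comp
        (ContinuousLinearMap.pi fun _ : Fin n => ContinuousLinearMap.id ℂ X)) u := by
  have h2 : HasFDerivAt (fun v : X => (fun _ : Fin n => v))
      (ContinuousLinearMap.pi fun _ : Fin n => ContinuousLinearMap.id ℂ X) u :=
    (ContinuousLinearMap.pi fun _ : Fin n => ContinuousLinearMap.id ℂ X).hasFDerivAt
  exact (R.hasFDerivAt (fun _ : Fin n => u)).comp u h2

private lemma diag_fderiv_apply {n : ℕ} (R : ContinuousMultilinearMap ℂ (fun _ : Fin n => X) Z)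
    (u x : X) :
    fderiv ℂ (fun v : X => R fun _ => v) u x
      = ∑ i : Fin n, R (update (fun _ => u) i x) := by
  rw [(diag_hasFDeriv R u).fderiv]
  simp [ContinuousMultilinearMap.linearDeriv_apply]

private lemma update_const_comp {n : ℕ} (σ : Equiv.Perm (Fin n)) (u : X) (x : X) (a : Fin n) :
    (update (fun _ : Fin n => u) a x) ∘ σ = update (fun _ : Fin n => u) (σ.symm a) x := by
  rw [Function.update_comp_equiv]
  rfl

private lemma update2_comp {n : ℕ} (σ : Equiv.Perm (Fin n)) (u x y : X) (a b : Fin n) :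
    (update (update (fun _ : Fin n => u) a y) b x) ∘ σ
      = update (update (fun _ : Fin n => u) (σ.symm a) y) (σ.symm b) x := by
  rw [Function.update_comp_equiv, Function.update_comp_equiv]
  rfl

private lemma diag_fderiv_symm {n : ℕ}
    (R : ContinuousMultilinearMap ℂ (fun _ : Fin (n + 1) => X) Z)
    (hR : ∀ (σ : Equiv.Perm (Fin (n + 1))) (v : Fin (n + 1) → X), R (v ∘ σ) = R v) (u x : X) :
    fderiv ℂ (fun v : X => R fun _ => v) u x
      = ((n + 1 : ℕ) : ℂ) • R (update (fun _ => u) (last n) x) := by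
  rw [diag_fderiv_apply]
  have h : ∀ i : Fin (n + 1),
      R (update (fun _ => u) i x) = R (update (fun _ => u) (last n) x) := by
    intro i
    have := hR (Equiv.swap i (last n)) (update (fun _ => u) (last n) x)
    rwa [update_const_comp, Equiv.symm_swap, Equiv.swap_apply_right] at this
  rw [Finset.sum_congr rfl fun i _ => h i, Finset.sum_const, Finset.card_univ,
    Fintype.card_fin, Nat.cast_smul_eq_nsmul]

private lemma aux_snoc_update {n : ℕ} (u x y : X) (i : Fin (n + 1)) :
    snoc (update (fun _ : Fin (n + 1) => u) i y) x
      = update (update (fun _ : Fin (n + 2) => u) i.castSucc y) (last (n + 1)) x := by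
  funext a
  induction a using Fin.lastCases with
  | last => simp
  | cast j =>
    rw [snoc_castSucc, Function.update_of_ne (Fin.castSucc_lt_last j).ne]
    rcases eq_or_ne j i with rfl | hj
    · simp
    · rw [Function.update_of_ne hj,
        Function.update_of_ne (fun hc => hj (Fin.castSucc_injective _ hc))]

private lemma aux_snoc_const {n : ℕ} (u x : X) :
    update (fun _ : Fin (n + 1) => u) (last n) x = snoc (fun _ : Fin n => u) x := by
  funext a
  induction a using Fin.lastCases with
  | last => simp
  | cast j => rw [snoc_castSucc, Function.update_of_ne (Fin.castSucc_lt_last j).ne]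

end helpers

/-- vector-valued version of Statement 5. Let `X, Y` be complex Banach
spaces and `m = k + 2 ≥ 2`.  A continuous `(m-1)`-homogeneous polynomial
`Q ∈ 𝓟(^{m-1}X, 𝓛(X,Y))` is the differential `dP` of some `P ∈ 𝓟(^m X, Y)` iff
`y ∘ d(x ∘ Q) = x ∘ d(y ∘ Q)` as elements of `𝓟(^{m-2}X, Y)`, for all `x, y ∈ X`. -/
theorem stmt13 (X Y : Type*) [NormedAddCommGroup X] [NormedSpace ℂ X] [CompleteSpace X]
    [NormedAddCommGroup Y] [NormedSpace ℂ Y] [CompleteSpace Y] (k : ℕ)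
    (Q : ContinuousMultilinearMap ℂ (fun _ : Fin (k + 1) => X) (X →L[ℂ] Y))
    (hQ : ∀ (σ : Equiv.Perm (Fin (k + 1))) (v : Fin (k + 1) → X), Q (v ∘ σ) = Q v) :
    (∃ P : ContinuousMultilinearMap ℂ (fun _ : Fin (k + 2) => X) Y,
        (∀ (σ : Equiv.Perm (Fin (k + 2))) (v : Fin (k + 2) → X), P (v ∘ σ) = P v) ∧
        ∀ u x : X, Q (fun _ => u) x = fderiv ℂ (fun v : X => P fun _ => v) u x) ↔
    (∀ x y : X,
        (fun u : X => fderiv ℂ (fun v : X => Q (fun _ => v) x) u y) =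
          fun u : X => fderiv ℂ (fun v : X => Q (fun _ => v) y) u x) := by
  have hk1 : ((k + 1 : ℕ) : ℂ) ≠ 0 := Nat.cast_ne_zero.mpr (Nat.succ_ne_zero k)
  have hk2 : ((k + 2 : ℕ) : ℂ) ≠ 0 := Nat.cast_ne_zero.mpr (Nat.succ_ne_zero (k + 1))
  -- the derivative of the diagonal restriction of `x ∘ Q`
  have hQd : ∀ x u y : X, fderiv ℂ (fun v : X => Q (fun _ => v) x) u y
      = ((k + 1 : ℕ) : ℂ) • Q (update (fun _ => u) (last k) y) x := by
    intro x u y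
    have hsymm : ∀ (σ : Equiv.Perm (Fin (k + 1))) (v : Fin (k + 1) → X),
        ((ContinuousLinearMap.apply ℂ Y x).compContinuousMultilinearMap Q) (v ∘ σ)
          = ((ContinuousLinearMap.apply ℂ Y x).compContinuousMultilinearMap Q) v := by
      intro σ v
      simp [hQ σ v]
    have h := diag_fderiv_symm
      ((ContinuousLinearMap.apply ℂ Y x).compContinuousMultilinearMap Q) hsymm u y
    simpa using h
  constructor
  · rintro ⟨P, hP, hPQ⟩ x y
    funext u
    set A : Fin (k + 2) := (last k).castSucc with hA
    set B : Fin (k + 2) := last (k + 1) with hB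
    have hAB : A ≠ B := (Fin.castSucc_lt_last (last k)).ne
    -- key claim
    have key : ∀ a b : X, Q (update (fun _ => u) (last k) b) a
        = ((k + 2 : ℕ) : ℂ) •
            P (update (update (fun _ : Fin (k + 2) => u) A b) B a) := by
      intro a b
      -- the function v ↦ Q(v,…,v) a in two ways
      have hfun : (fun v : X => Q (fun _ => v) a)
          = fun v : X => ((k + 2 : ℕ) : ℂ) •
              ((ContinuousLinearMap.apply ℂ Y a).compContinuousMultilinearMap P.curryRight)
                (fun _ : Fin (k + 1) => v) := by
        funext v
        rw [hPQ v a, diag_fderiv_symm P hP v a]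
        congr 1
        simp [aux_snoc_const]
      have h1 : fderiv ℂ (fun v : X => Q (fun _ => v) a) u b
          = ((k + 1 : ℕ) : ℂ) • Q (update (fun _ => u) (last k) b) a := hQd a u b
      have h2 : fderiv ℂ (fun v : X => Q (fun _ => v) a) u b
          = ((k + 2 : ℕ) : ℂ) • ∑ i : Fin (k + 1),
              P (snoc (update (fun _ : Fin (k + 1) => u) i b) a) := by
        rw [hfun]
        have hd := ((diag_hasFDeriv
          ((ContinuousLinearMap.apply ℂ Y a).compContinuousMultilinearMap P.curryRight)
            u).const_smul ((k + 2 : ℕ) : ℂ)).fderiv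
        erw [hd]
        simp [ContinuousMultilinearMap.linearDeriv_apply]
      -- each summand equals the `A`-term
      have hterm : ∀ i : Fin (k + 1),
          P (snoc (update (fun _ : Fin (k + 1) => u) i b) a)
            = P (update (update (fun _ : Fin (k + 2) => u) A b) B a) := by
        intro i
        rw [aux_snoc_update]
        have := hP (Equiv.swap i.castSucc A)
          (update (update (fun _ : Fin (k + 2) => u) A b) B a)
        rwa [update2_comp, Equiv.symm_swap, Equiv.swap_apply_right,
          Equiv.swap_apply_of_ne_of_ne (Fin.castSucc_lt_last i).ne.symm hAB.symm] at this
      rw [Finset.sum_congr rfl fun i _ => hterm i, Finset.sum_const, Finset.card_univ,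
        Fintype.card_fin] at h2
      have h3 := h1.symm.trans h2
      rw [smul_comm ((k + 2 : ℕ) : ℂ) (k + 1 : ℕ),
        ← Nat.cast_smul_eq_nsmul ℂ (k + 1)] at h3
      exact smul_right_injective Y hk1 h3
    rw [hQd x u y, hQd y u x, key x y, key y x]
    congr 2
    have := hP (Equiv.swap A B) (update (update (fun _ : Fin (k + 2) => u) A x) B y)
    rwa [update2_comp, Equiv.symm_swap, Equiv.swap_apply_left, Equiv.swap_apply_right,
      Function.update_comm hAB.symm] at this
  · intro h
    -- symmetry of Q in the "mixed" slots, from the hypothesis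
    have hsym : ∀ u x y : X, Q (update (fun _ => u) (last k) y) x
        = Q (update (fun _ => u) (last k) x) y := by
      intro u x y
      have hxy := congrFun (h x y) u
      rw [hQd x u y, hQd y u x] at hxy
      exact smul_right_injective Y hk1 hxy
    have hdiagQ : ∀ u x : X, Q (update (fun _ => u) (last k) x) u = Q (fun _ => u) x := by
      intro u x
      have := hsym u x u
      rw [Function.update_eq_self (last k) (fun _ : Fin (k + 1) => u)] at this
      exact this.symm
    -- the uncurried polynomial
    set P₀ : ContinuousMultilinearMap ℂ (fun _ : Fin (k + 2) => X) Y :=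
      ContinuousMultilinearMap.uncurryRight (Ei := fun _ : Fin (k + 2) => X) Q with hP₀
    set c : ℂ := (((k + 2) * Nat.factorial (k + 2) : ℕ) : ℂ) with hc
    refine ⟨c⁻¹ • ∑ σ : Equiv.Perm (Fin (k + 2)), P₀.domDomCongr σ, ?_, ?_⟩
    · intro τ v
      simp only [ContinuousMultilinearMap.smul_apply, ContinuousMultilinearMap.sum_apply,
        ContinuousMultilinearMap.domDomCongr_apply]
      congr 1
      exact Fintype.sum_equiv (Equiv.mulLeft τ) _ _ fun σ => rfl
    · intro u x
      have hPsym : ∀ (σ : Equiv.Perm (Fin (k + 2))) (v : Fin (k + 2) → X),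
          (c⁻¹ • ∑ τ : Equiv.Perm (Fin (k + 2)), P₀.domDomCongr τ) (v ∘ σ)
            = (c⁻¹ • ∑ τ : Equiv.Perm (Fin (k + 2)), P₀.domDomCongr τ) v := by
        intro σ v
        simp only [ContinuousMultilinearMap.smul_apply, ContinuousMultilinearMap.sum_apply,
          ContinuousMultilinearMap.domDomCongr_apply]
        congr 1
        exact Fintype.sum_equiv (Equiv.mulLeft σ) _ _ fun τ => rfl
      rw [diag_fderiv_symm _ hPsym u x]
      have hterm : ∀ i : Fin (k + 2),
          P₀ (update (fun _ : Fin (k + 2) => u) i x) = Q (fun _ => u) x := by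
        intro i
        induction i using Fin.lastCases with
        | last =>
          rw [hP₀, ContinuousMultilinearMap.uncurryRight_apply, Fin.init_update_last,
            Function.update_self]
          rfl
        | cast j =>
          rw [hP₀, ContinuousMultilinearMap.uncurryRight_apply, Fin.init_update_castSucc,
            Function.update_of_ne (Fin.castSucc_lt_last j).ne']
          have hmv := hQ (Equiv.swap j (last k)) (update (fun _ => u) (last k) x)
          rw [update_const_comp, Equiv.symm_swap, Equiv.swap_apply_right] at hmv
          show Q (update (Fin.init fun _ : Fin (k + 2) => u) j x) u = Q (fun _ => u) x
          have hinit : (Fin.init fun _ : Fin (k + 2) => u) = fun _ : Fin (k + 1) => u := rfl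
          rw [hinit, hmv, hdiagQ u x]
      simp only [ContinuousMultilinearMap.smul_apply, ContinuousMultilinearMap.sum_apply,
        ContinuousMultilinearMap.domDomCongr_apply]
      have hcomp : ∀ σ : Equiv.Perm (Fin (k + 2)),
          (P₀ fun i => (update (fun _ : Fin (k + 2) => u) (last (k + 1)) x) (σ i))
            = Q (fun _ => u) x := by
        intro σ
        show P₀ ((update (fun _ : Fin (k + 2) => u) (last (k + 1)) x) ∘ σ) = _
        rw [update_const_comp]
        exact hterm _
      rw [Finset.sum_congr rfl fun σ _ => hcomp σ, Finset.sum_const, Finset.card_univ,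
        Fintype.card_perm, Fintype.card_fin]
      rw [← Nat.cast_smul_eq_nsmul ℂ (Nat.factorial (k + 2)), smul_smul, smul_smul, hc]
      have hf : ((Nat.factorial (k + 2) : ℕ) : ℂ) ≠ 0 :=
        Nat.cast_ne_zero.mpr (Nat.factorial_ne_zero _)
      rw [show ((k + 2 : ℕ) : ℂ) * ((((k + 2) * Nat.factorial (k + 2) : ℕ) : ℂ))⁻¹ *
          ((Nat.factorial (k + 2) : ℕ) : ℂ) = 1 by
        rw [Nat.cast_mul, mul_inv]
        field_simp]
      rw [one_smul]
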